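/- Let A be a commutative ring, let R = A[x₁,x₂] be the polynomial ring in two variables over A, and let μ : R → R be the A-algebra automorphism exchanging x₁ and x₂. Let d ≥ 1, let p₁ ∈ R be a polynomial involving only the variable x₁ which is monic of degree d as a polynomial in x₁, and set p₂ = μ(p₁). Suppose y ∈ R is fixed by μ and y = a₁·p₁ + a₂·p₂ for some a₁, a₂ ∈ R both of total degree strictly less than d. Then y belongs to the ideal of R generated by p₁ + p₂ and x₁·p₁ + x₂·p₂. -/

import Mathlib

open MvPolynomial

private lemma aux_mem {A : Type*} [CommRing A] (p₁ p₂ : MvPolynomial (Fin 2) A) :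
    ∀ (n i j : ℕ), i + j ≤ n →
      X 0 ^ i * X 1 ^ j * p₁ + X 0 ^ j * X 1 ^ i * p₂ ∈
        Ideal.span ({p₁ + p₂, X 0 * p₁ + X 1 * p₂} : Set (MvPolynomial (Fin 2) A)) := by
  have gen1 : p₁ + p₂ ∈
      Ideal.span ({p₁ + p₂, X 0 * p₁ + X 1 * p₂} : Set (MvPolynomial (Fin 2) A)) :=
    Ideal.subset_span (by simp)
  have gen2 : X 0 * p₁ + X 1 * p₂ ∈
      Ideal.span ({p₁ + p₂, X 0 * p₁ + X 1 * p₂} : Set (MvPolynomial (Fin 2) A)) :=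
    Ideal.subset_span (by simp)
  intro n
  induction n with
  | zero =>
    intro i j hij
    obtain ⟨hi, hj⟩ : i = 0 ∧ j = 0 := by omega
    subst hi; subst hj
    simpa using gen1
  | succ n ih =>
    intro i j hij
    obtain _ | i := i
    · obtain _ | j := j
      · simpa using gen1
      · obtain _ | j := j
        · -- u_{0,1} = X1 p₁ + X0 p₂
          have e : X 0 ^ 0 * X 1 ^ 1 * p₁ + X 0 ^ 1 * X 1 ^ 0 * p₂ =
              (X 0 + X 1) * (p₁ + p₂) - (X 0 * p₁ + X 1 * p₂) := by ring
          rw [e]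
          exact sub_mem (Ideal.mul_mem_left _ _ gen1) gen2
        · have h1 := ih 0 (j + 1) (by omega)
          have h2 := ih 0 j (by omega)
          have e : X 0 ^ 0 * X 1 ^ (j + 2) * p₁ + X 0 ^ (j + 2) * X 1 ^ 0 * p₂ =
              (X 0 + X 1) * (X 0 ^ 0 * X 1 ^ (j + 1) * p₁ + X 0 ^ (j + 1) * X 1 ^ 0 * p₂)
                - X 0 * X 1 * (X 0 ^ 0 * X 1 ^ j * p₁ + X 0 ^ j * X 1 ^ 0 * p₂) := by ring
          rw [e]
          exact sub_mem (Ideal.mul_mem_left _ _ h1) (Ideal.mul_mem_left _ _ h2)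
    · obtain _ | j := j
      · obtain _ | i := i
        · simpa using gen2
        · have h1 := ih (i + 1) 0 (by omega)
          have h2 := ih i 0 (by omega)
          have e : X 0 ^ (i + 2) * X 1 ^ 0 * p₁ + X 0 ^ 0 * X 1 ^ (i + 2) * p₂ =
              (X 0 + X 1) * (X 0 ^ (i + 1) * X 1 ^ 0 * p₁ + X 0 ^ 0 * X 1 ^ (i + 1) * p₂)
                - X 0 * X 1 * (X 0 ^ i * X 1 ^ 0 * p₁ + X 0 ^ 0 * X 1 ^ i * p₂) := by ring
          rw [e]
          exact sub_mem (Ideal.mul_mem_left _ _ h1) (Ideal.mul_mem_left _ _ h2)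
      · have h := ih i j (by omega)
        have e : X 0 ^ (i + 1) * X 1 ^ (j + 1) * p₁ + X 0 ^ (j + 1) * X 1 ^ (i + 1) * p₂ =
            X 0 * X 1 * (X 0 ^ i * X 1 ^ j * p₁ + X 0 ^ j * X 1 ^ i * p₂) := by ring
        rw [e]
        exact Ideal.mul_mem_left _ _ h

private lemma aux_mem₂ {A : Type*} [CommRing A] (p₁ p₂ : MvPolynomial (Fin 2) A)
    (g : MvPolynomial (Fin 2) A) :
    g * p₁ + (rename (Equiv.swap (0 : Fin 2) 1)) g * p₂ ∈
      Ideal.span ({p₁ + p₂, X 0 * p₁ + X 1 * p₂} : Set (MvPolynomial (Fin 2) A)) := by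
  induction g using MvPolynomial.induction_on' with
  | monomial s c =>
    have hm : (monomial s c : MvPolynomial (Fin 2) A) = C c * (X 0 ^ s 0 * X 1 ^ s 1) := by
      rw [monomial_eq, Finsupp.prod_fintype _ _ fun i => pow_zero _, Fin.prod_univ_two]
    rw [hm]
    simp only [map_mul, map_pow, rename_C, rename_X, Equiv.swap_apply_left,
      Equiv.swap_apply_right]
    have e : C c * (X 0 ^ s 0 * X 1 ^ s 1) * p₁ + C c * (X 1 ^ s 0 * X 0 ^ s 1) * p₂ =
        C c * (X 0 ^ s 0 * X 1 ^ s 1 * p₁ + X 0 ^ s 1 * X 1 ^ s 0 * p₂) := by ring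
    rw [e]
    exact Ideal.mul_mem_left _ _ (aux_mem p₁ p₂ (s 0 + s 1) (s 0) (s 1) le_rfl)
  | add f g hf hg =>
    rw [map_add]
    have e : (f + g) * p₁ + (rename (Equiv.swap (0 : Fin 2) 1) f
        + rename (Equiv.swap (0 : Fin 2) 1) g) * p₂ =
        (f * p₁ + rename (Equiv.swap (0 : Fin 2) 1) f * p₂)
          + (g * p₁ + rename (Equiv.swap (0 : Fin 2) 1) g * p₂) := by ring
    rw [e]
    exact add_mem hf hg

/-- Let `A` be a commutative ring, `R = A[x₁,x₂]` and `μ` the `A`-algebra automorphism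
exchanging `x₁` and `x₂`.  Let `d ≥ 1`, let `p₁` be a polynomial involving only the
variable `x₁` which is monic of degree `d` in `x₁` (i.e. the image under `x ↦ x₁` of a
monic univariate polynomial `q` of degree `d`), and `p₂ = μ(p₁)`.  If `y` is fixed by `μ`
and `y = a₁·p₁ + a₂·p₂` with `a₁, a₂` of total degree `< d`, then `y` belongs to the
ideal generated by `p₁ + p₂` and `x₁·p₁ + x₂·p₂`. -/
theorem stmt_2 (A : Type*) [CommRing A] (d : ℕ) (hd : 1 ≤ d)
    (q : Polynomial A) (hq : q.Monic) (hqd : q.natDegree = d)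
    (p₁ p₂ : MvPolynomial (Fin 2) A)
    (hp₁ : p₁ = Polynomial.aeval (X (0 : Fin 2)) q)
    (hp₂ : p₂ = (renameEquiv A (Equiv.swap (0 : Fin 2) 1)) p₁)
    (y a₁ a₂ : MvPolynomial (Fin 2) A)
    (hfix : (renameEquiv A (Equiv.swap (0 : Fin 2) 1)) y = y)
    (hy : y = a₁ * p₁ + a₂ * p₂)
    (ha₁ : a₁.totalDegree < d) (ha₂ : a₂.totalDegree < d) :
    y ∈ Ideal.span ({p₁ + p₂, X 0 * p₁ + X 1 * p₂} : Set (MvPolynomial (Fin 2) A)) := by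
  rcases subsingleton_or_nontrivial A with hA | hA
  · rw [Subsingleton.elim y 0]
    exact Ideal.zero_mem _
  set μ := renameEquiv A (Equiv.swap (0 : Fin 2) 1) with hμ
  -- swap is an involution
  have hswap : ∀ r : MvPolynomial (Fin 2) A, μ (μ r) = r := by
    intro r
    have hsymm : μ.symm = μ := by rw [hμ, renameEquiv_symm, Equiv.symm_swap]
    calc μ (μ r) = μ.symm (μ r) := by rw [hsymm]
    _ = r := μ.symm_apply_apply r
  -- basic facts about the images of p₁, p₂
  have hμp₁ : μ p₁ = p₂ := hp₂.symm
  have hμp₂ : μ p₂ = p₁ := by rw [hp₂, hswap]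
  -- apply μ to hy
  have E : a₁ * p₁ + a₂ * p₂ = μ a₂ * p₁ + μ a₁ * p₂ := by
    have h := congrArg μ hy
    rw [hfix, map_add, map_mul, map_mul, hμp₁, hμp₂, hy] at h
    linear_combination h
  -- the key equation for b = a₁ - μ a₂
  have hbp : (a₁ - μ a₂) * p₁ = (μ a₁ - a₂) * p₂ := by linear_combination E
  -- image of p₁ under finSuccEquiv is monic of degree d
  have hP₁ : (finSuccEquiv A 1) p₁ = q.map (algebraMap A (MvPolynomial (Fin 1) A)) := by
    rw [hp₁, ← Polynomial.aeval_algHom_apply, finSuccEquiv_X_zero,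
      ← Polynomial.aeval_map_algebraMap (MvPolynomial (Fin 1) A),
      Polynomial.aeval_X_left_apply]
  have hP₁monic : ((finSuccEquiv A 1) p₁).Monic := by
    rw [hP₁]; exact hq.map _
  have hP₁deg : ((finSuccEquiv A 1) p₁).natDegree = d := by
    rw [hP₁, hq.natDegree_map, hqd]
  -- image of p₂ under finSuccEquiv is a constant
  have hp₂' : p₂ = Polynomial.aeval (X (1 : Fin 2)) q := by
    rw [hp₂, hp₁, renameEquiv_apply, ← Polynomial.aeval_algHom_apply, rename_X,
      Equiv.swap_apply_left]
  have hP₂ : (finSuccEquiv A 1) p₂ =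
      Polynomial.C (Polynomial.aeval (X (0 : Fin 1)) q) := by
    rw [hp₂', ← Polynomial.aeval_algHom_apply,
      show (X (1 : Fin 2) : MvPolynomial (Fin 2) A) = X (Fin.succ (0 : Fin 1)) from rfl,
      finSuccEquiv_X_succ]
    exact (Polynomial.aeval_algHom_apply (Polynomial.CAlgHom (R := A)) _ q)
  -- b = 0
  have hb : a₁ - μ a₂ = 0 := by
    by_contra hb0
    have hB : (finSuccEquiv A 1) (a₁ - μ a₂) ≠ 0 := by
      rw [map_ne_zero_iff _ (finSuccEquiv A 1).injective]
      exact hb0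
    have heq : (finSuccEquiv A 1) (a₁ - μ a₂) * (finSuccEquiv A 1) p₁ =
        (finSuccEquiv A 1) (μ a₁ - a₂) * (finSuccEquiv A 1) p₂ := by
      rw [← map_mul, ← map_mul, hbp]
    have hdegb : ((finSuccEquiv A 1) (a₁ - μ a₂)).natDegree < d := by
      rw [natDegree_finSuccEquiv]
      calc degreeOf 0 (a₁ - μ a₂) ≤ (a₁ - μ a₂).totalDegree :=
            degreeOf_le_totalDegree _ _
      _ ≤ max a₁.totalDegree (μ a₂).totalDegree := totalDegree_sub _ _
      _ < d := by
          refine max_lt ha₁ (lt_of_le_of_lt ?_ ha₂)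
          rw [hμ, renameEquiv_apply]
          exact totalDegree_rename_le _ _
    have hdegc : ((finSuccEquiv A 1) (μ a₁ - a₂)).natDegree < d := by
      rw [natDegree_finSuccEquiv]
      calc degreeOf 0 (μ a₁ - a₂) ≤ (μ a₁ - a₂).totalDegree :=
            degreeOf_le_totalDegree _ _
      _ ≤ max (μ a₁).totalDegree a₂.totalDegree := totalDegree_sub _ _
      _ < d := by
          refine max_lt (lt_of_le_of_lt ?_ ha₁) ha₂
          rw [hμ, renameEquiv_apply]
          exact totalDegree_rename_le _ _
    have hL : ((finSuccEquiv A 1) (a₁ - μ a₂) * (finSuccEquiv A 1) p₁).natDegree =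
        ((finSuccEquiv A 1) (a₁ - μ a₂)).natDegree + d := by
      rw [mul_comm, hP₁monic.natDegree_mul' hB, hP₁deg, add_comm]
    have hR : ((finSuccEquiv A 1) (μ a₁ - a₂) * (finSuccEquiv A 1) p₂).natDegree < d := by
      refine lt_of_le_of_lt (Polynomial.natDegree_mul_le) ?_
      rw [hP₂, Polynomial.natDegree_C, add_zero]
      exact hdegc
    rw [← heq, hL] at hR
    omega
  -- conclude: a₂ = μ a₁, so y has the symmetric form
  have ha : a₁ = μ a₂ := by linear_combination hb
  have ha' : μ a₁ = a₂ := by rw [ha, hswap]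
  have h2 : a₂ = rename (Equiv.swap (0 : Fin 2) 1) a₁ := by
    rw [← ha', hμ, renameEquiv_apply]
  rw [hy, h2]
  exact aux_mem₂ p₁ p₂ a₁
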